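/- Let V be a finite-dimensional vector space over F, let T ∈ End(V), and suppose there exists v ∈ V such that ⟨T⟩v = V, where ⟨T⟩ is the subalgebra of End(V) generated by T. Then every G ∈ End(V) commuting with T lies in ⟨T⟩. -/
import Mathlib


theorem stmt_18 {F V : Type*} [Field F] [AddCommGroup V] [Module F V]
    [FiniteDimensional F V]
    (T : Module.End F V) (v : V)
    (hcyc : ∀ w : V, ∃ f ∈ Algebra.adjoin F {T}, f v = w) :
    ∀ G : Module.End F V, Commute G T → G ∈ Algebra.adjoin F {T} := by
  intro G hGT
  obtain ⟨f, hf, hfv⟩ := hcyc (G v)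
  have : G = f := by
    ext w
    obtain ⟨g, hg, rfl⟩ := hcyc w
    have hc : Commute G g :=
      Algebra.commute_of_mem_adjoin_singleton_of_commute hg hGT
    have hfg : Commute f g :=
      Algebra.commute_of_mem_adjoin_singleton_of_commute hg
        (Algebra.commute_of_mem_adjoin_self hf).symm
    calc G (g v) = (G * g) v := rfl
      _ = (g * G) v := by rw [hc]
      _ = g (G v) := rfl
      _ = g (f v) := by rw [hfv]
      _ = (g * f) v := rfl
      _ = (f * g) v := by rw [hfg]
      _ = f (g v) := rfl
  rw [this]; exact hf
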